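/- Consider the planar system ẋ₁ = -λ₁x₁ + c₁x₂, ẋ₂ = -c₂|x₁| with λ₁, c₁, c₂ > 0 satisfying (c₁/λ₁)·(c₂/λ₁) < 1/16. Then there exist a pair (x₁(t₀), x₂(t₀)) with x₂(t₀) > 0 and a nonempty set of initial conditions {(x₁⁰, x₂⁰) : x₂⁰ > 0, |x₁⁰| ≤ C·x₂⁰} with C > 0 such that for all initial conditions in this set the solution satisfies x₂(t) ∈ [0, x₂(t₀)] for all t ≥ t₀ and x₁(t) → 0, x₂(t) → x̄ for some x̄ ∈ [0, x₂(t₀)] as t → ∞. -/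

import Mathlib

open Filter Set Topology

lemma ev_neg_right {u : ℝ → ℝ} {s d : ℝ} (hu : HasDerivAt u d s) (h0 : u s = 0)
    (hd : d < 0) : ∀ᶠ t in 𝓝[>] s, u t < 0 := by
  have h := hasDerivAt_iff_tendsto_slope.mp hu
  have h2 : ∀ᶠ t in 𝓝[≠] s, slope u s t < 0 := h.eventually (gt_mem_nhds hd)
  have h3 : 𝓝[>] s ≤ 𝓝[≠] s := nhdsWithin_mono _ (fun x hx => ne_of_gt hx)
  filter_upwards [h3 h2, self_mem_nhdsWithin] with t ht hts
  rw [slope_def_field] at ht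
  have hts' : 0 < t - s := sub_pos.mpr hts
  have := mul_neg_of_neg_of_pos ht hts'
  rw [div_mul_cancel₀] at this
  · linarith
  · exact ne_of_gt hts'

lemma cone_inv (lam₁ c₁ c₂ K t₀ : ℝ) (hc₁ : 0 < c₁) (hc₂ : 0 < c₂) (hK : 0 < K)
    (hplus : 0 < lam₁ * K - c₁ - c₂ * K ^ 2)
    (x₁ x₂ : ℝ → ℝ)
    (hd1 : ∀ t, t₀ ≤ t → HasDerivAt x₁ (-lam₁ * x₁ t + c₁ * x₂ t) t)
    (hd2 : ∀ t, t₀ ≤ t → HasDerivAt x₂ (-c₂ * |x₁ t|) t)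
    (hpos : 0 < x₂ t₀) (hinit : |x₁ t₀| ≤ K * x₂ t₀) :
    ∀ t, t₀ ≤ t → |x₁ t| ≤ K * x₂ t := by
  by_contra hcon
  push_neg at hcon
  obtain ⟨t', ht', hVt'⟩ := hcon
  set S : Set ℝ := {t | t₀ ≤ t ∧ K * x₂ t < |x₁ t|} with hS
  have hSne : S.Nonempty := ⟨t', ht', hVt'⟩
  have hSbd : BddBelow S := ⟨t₀, fun t ht => ht.1⟩
  set s := sInf S with hsdef
  have hs0 : t₀ ≤ s := le_csInf hSne (fun t ht => ht.1)
  have hgood : ∀ t, t₀ ≤ t → t < s → |x₁ t| ≤ K * x₂ t := by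
    intro t h1 h2
    by_contra h
    push_neg at h
    exact absurd (csInf_le hSbd ⟨h1, h⟩) (not_le.mpr h2)
  have hcV : ContinuousAt (fun t => |x₁ t| - K * x₂ t) s :=
    ((hd1 s hs0).continuousAt.abs).sub (((hd2 s hs0).continuousAt).const_smul K)
  -- V s ≤ 0
  have hVle : |x₁ s| - K * x₂ s ≤ 0 := by
    rcases eq_or_lt_of_le hs0 with h | h
    · rw [← h]; linarith
    · have hev : ∀ᶠ t in 𝓝[<] s, |x₁ t| - K * x₂ t ≤ 0 := by
        filter_upwards [Ioo_mem_nhdsLT_of_mem ⟨h, le_refl s⟩] with t ht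
        linarith [hgood t ht.1.le ht.2]
      exact le_of_tendsto (hcV.continuousWithinAt.tendsto) hev
  -- V s ≥ 0
  have hVge : 0 ≤ |x₁ s| - K * x₂ s := by
    by_contra h
    push_neg at h
    have hev : ∀ᶠ t in 𝓝 s, |x₁ t| - K * x₂ t < 0 := hcV.eventually (gt_mem_nhds h)
    obtain ⟨ε, hε, hball⟩ := Metric.eventually_nhds_iff.mp hev
    obtain ⟨t, htS, htlt⟩ := exists_lt_of_csInf_lt hSne (show s < s + ε by linarith)
    have h1 : s ≤ t := csInf_le hSbd htS
    have h2 : |x₁ t| - K * x₂ t < 0 := by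
      apply hball
      rw [Real.dist_eq, abs_lt]
      constructor <;> linarith
    linarith [htS.2]
  have hVs : |x₁ s| = K * x₂ s := by linarith
  -- x₂ positive on [t₀, s]
  have hconeIcc : ∀ t ∈ Icc t₀ s, |x₁ t| ≤ K * x₂ t := by
    intro t ht
    rcases lt_or_eq_of_le ht.2 with h | h
    · exact hgood t ht.1 h
    · rw [h]; linarith
  have hx2s : 0 < x₂ s := by
    set g : ℝ → ℝ := fun t => x₂ t * Real.exp (c₂ * K * (t - t₀)) with hg
    have hgd : ∀ t ∈ Icc t₀ s, HasDerivAt g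
        ((c₂ * K * x₂ t - c₂ * |x₁ t|) * Real.exp (c₂ * K * (t - t₀))) t := by
      intro t ht
      have he : HasDerivAt (fun t => Real.exp (c₂ * K * (t - t₀)))
          (c₂ * K * Real.exp (c₂ * K * (t - t₀))) t := by
        have h1 : HasDerivAt (fun t : ℝ => c₂ * K * (t - t₀)) (c₂ * K) t := by
          simpa using ((hasDerivAt_id t).sub_const t₀).const_mul (c₂ * K)
        simpa [mul_comm] using h1.exp
      have : HasDerivAt (fun y => x₂ y * Real.exp (c₂ * K * (y - t₀))) _ t := (hd2 t ht.1).mul he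
      convert this using 1
      ring
    have hmono : MonotoneOn g (Icc t₀ s) := by
      apply monotoneOn_of_deriv_nonneg (convex_Icc t₀ s)
      · exact fun t ht => ((hgd t ht).continuousAt).continuousWithinAt
      · intro t ht
        rw [interior_Icc] at ht
        exact (hgd t ⟨ht.1.le, ht.2.le⟩).differentiableAt.differentiableWithinAt
      · intro t ht
        rw [interior_Icc] at ht
        rw [(hgd t ⟨ht.1.le, ht.2.le⟩).deriv]
        have ha := hconeIcc t ⟨ht.1.le, ht.2.le⟩
        have hb := Real.exp_pos (c₂ * K * (t - t₀))
        have h4 : 0 ≤ c₂ * K * x₂ t - c₂ * |x₁ t| := by nlinarith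
        exact mul_nonneg h4 hb.le
    have h1 : g t₀ ≤ g s := hmono ⟨le_refl _, hs0⟩ ⟨hs0, le_refl _⟩ hs0
    have h2 : g t₀ = x₂ t₀ := by simp [hg]
    have h3 := Real.exp_pos (c₂ * K * (s - t₀))
    have e1 : g s = x₂ s * Real.exp (c₂ * K * (s - t₀)) := rfl
    rw [h2, e1] at h1
    nlinarith
  -- final contradiction machinery
  have final : (∀ᶠ t in 𝓝[>] s, |x₁ t| < K * x₂ t) → False := by
    intro hev
    obtain ⟨u, hu, hsub⟩ := mem_nhdsGT_iff_exists_Ioo_subset.mp hev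
    have : ∀ t ∈ S, u ≤ t := by
      intro t htS
      by_contra h
      push_neg at h
      have h1 : s ≤ t := csInf_le hSbd htS
      rcases eq_or_lt_of_le h1 with h2 | h2
      · rw [← h2] at htS; linarith [htS.2, hVs.ge]
      · exact absurd (hsub ⟨h2, h⟩) (not_lt.mpr (le_of_lt htS.2))
    have : u ≤ s := le_csInf hSne this
    rw [mem_Ioi] at hu
    linarith
  have hx1ne : x₁ s ≠ 0 := by
    intro h
    rw [h] at hVs
    simp at hVs
    rcases hVs with h' | h' <;> linarith
  rcases hx1ne.lt_or_gt with hneg | hpos'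
  · -- x₁ s < 0
    have habs : |x₁ s| = -x₁ s := abs_of_neg hneg
    have hu : HasDerivAt (fun t => -x₁ t - K * x₂ t)
        (-(-lam₁ * x₁ s + c₁ * x₂ s) - K * (-c₂ * |x₁ s|)) s :=
      ((hd1 s hs0).neg).sub ((hd2 s hs0).const_mul K)
    have hd : -(-lam₁ * x₁ s + c₁ * x₂ s) - K * (-c₂ * |x₁ s|) < 0 := by
      rw [habs]
      have hx1 : -x₁ s = K * x₂ s := by rw [← habs]; exact hVs
      nlinarith
    have h0 : -x₁ s - K * x₂ s = 0 := by rw [← habs, hVs]; ring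
    have hev1 := ev_neg_right hu h0 hd
    have hother : ∀ᶠ t in 𝓝[>] s, x₁ t - K * x₂ t < 0 := by
      have hc : ContinuousAt (fun t => x₁ t - K * x₂ t) s :=
        (hd1 s hs0).continuousAt.sub ((hd2 s hs0).continuousAt.const_smul K)
      have hlt : x₁ s - K * x₂ s < 0 := by nlinarith [hVs, abs_nonneg (x₁ s)]
      exact nhdsWithin_le_nhds (hc.eventually (gt_mem_nhds hlt))
    apply final
    filter_upwards [hev1, hother] with t h1 h2
    rw [abs_lt]; constructor <;> linarith
  · -- x₁ s > 0
    have habs : |x₁ s| = x₁ s := abs_of_pos hpos'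
    have hu : HasDerivAt (fun t => x₁ t - K * x₂ t)
        ((-lam₁ * x₁ s + c₁ * x₂ s) - K * (-c₂ * |x₁ s|)) s :=
      (hd1 s hs0).sub ((hd2 s hs0).const_mul K)
    have hd : (-lam₁ * x₁ s + c₁ * x₂ s) - K * (-c₂ * |x₁ s|) < 0 := by
      rw [habs]
      have hx1 : x₁ s = K * x₂ s := by rw [← habs]; exact hVs
      nlinarith
    have h0 : x₁ s - K * x₂ s = 0 := by rw [← habs, hVs]; ring
    have hev1 := ev_neg_right hu h0 hd
    have hother : ∀ᶠ t in 𝓝[>] s, -x₁ t - K * x₂ t < 0 := by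
      have hc : ContinuousAt (fun t => -x₁ t - K * x₂ t) s :=
        ((hd1 s hs0).continuousAt.neg).sub ((hd2 s hs0).continuousAt.const_smul K)
      have hlt : -x₁ s - K * x₂ s < 0 := by nlinarith [hVs, abs_nonneg (x₁ s)]
      exact nhdsWithin_le_nhds (hc.eventually (gt_mem_nhds hlt))
    apply final
    filter_upwards [hev1, hother] with t h1 h2
    rw [abs_lt]; constructor <;> linarith

theorem stmt15 (lam₁ c₁ c₂ t₀ : ℝ)
    (hlam₁ : 0 < lam₁) (hc₁ : 0 < c₁) (hc₂ : 0 < c₂)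
    (hsg : (c₁ / lam₁) * (c₂ / lam₁) < 1 / 16) :
    ∃ C > (0 : ℝ),
      (∃ p : ℝ × ℝ, 0 < p.2 ∧ |p.1| ≤ C * p.2) ∧
      ∀ x₁ x₂ : ℝ → ℝ,
        (∀ t, t₀ ≤ t → HasDerivAt x₁ (-lam₁ * x₁ t + c₁ * x₂ t) t) →
        (∀ t, t₀ ≤ t → HasDerivAt x₂ (-c₂ * |x₁ t|) t) →
        0 < x₂ t₀ → |x₁ t₀| ≤ C * x₂ t₀ →
        (∀ t, t₀ ≤ t → x₂ t ∈ Set.Icc 0 (x₂ t₀)) ∧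
        Filter.Tendsto x₁ Filter.atTop (nhds 0) ∧
        ∃ xbar ∈ Set.Icc 0 (x₂ t₀),
          Filter.Tendsto x₂ Filter.atTop (nhds xbar) := by
  set K : ℝ := lam₁ / (2 * c₂) with hKdef
  have hK : 0 < K := by positivity
  have hcc : c₁ * c₂ * 16 < lam₁ ^ 2 := by
    have h1 : lam₁ ≠ 0 := ne_of_gt hlam₁
    rw [div_mul_div_comm, div_lt_div_iff₀ (by positivity) (by norm_num)] at hsg
    nlinarith
  have hplus : 0 < lam₁ * K - c₁ - c₂ * K ^ 2 := by
    have hKeq : lam₁ = 2 * c₂ * K := by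
      rw [hKdef]; field_simp
    rw [hKeq] at hcc ⊢
    nlinarith [mul_pos hc₁ hc₂, mul_pos hc₂ hK]
  refine ⟨K, hK, ⟨⟨0, 1⟩, by norm_num, by simpa using hK.le⟩, ?_⟩
  intro x₁ x₂ hd1 hd2 hpos hinit
  have cone : ∀ t, t₀ ≤ t → |x₁ t| ≤ K * x₂ t :=
    cone_inv lam₁ c₁ c₂ K t₀ hc₁ hc₂ hK hplus x₁ x₂ hd1 hd2 hpos hinit
  have hx2nonneg : ∀ t, t₀ ≤ t → 0 ≤ x₂ t := by
    intro t ht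
    have h1 := cone t ht
    have h2 := abs_nonneg (x₁ t)
    nlinarith
  have hanti : AntitoneOn x₂ (Ici t₀) := by
    apply antitoneOn_of_deriv_nonpos (convex_Ici t₀)
    · exact fun t ht => (hd2 t ht).continuousAt.continuousWithinAt
    · intro t ht
      rw [interior_Ici] at ht
      exact (hd2 t ht.le).differentiableAt.differentiableWithinAt
    · intro t ht
      rw [interior_Ici] at ht
      rw [(hd2 t ht.le).deriv]
      have := abs_nonneg (x₁ t)
      nlinarith
  have hIcc : ∀ t, t₀ ≤ t → x₂ t ∈ Set.Icc 0 (x₂ t₀) := fun t ht =>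
    ⟨hx2nonneg t ht, hanti self_mem_Ici ht ht⟩
  set f : ℝ → ℝ := fun t => x₂ (max t t₀) with hf
  have hfanti : Antitone f := fun a b hab =>
    hanti (le_max_right a t₀) (le_max_right b t₀) (max_le_max hab (le_refl t₀))
  have hfbdd : BddBelow (Set.range f) := by
    refine ⟨0, ?_⟩
    rintro y ⟨t, rfl⟩
    exact hx2nonneg _ (le_max_right t t₀)
  have hlim : Tendsto f atTop (𝓝 (⨅ t, f t)) := tendsto_atTop_ciInf hfanti hfbdd
  set xbar : ℝ := ⨅ t, f t with hxbar
  have hfeq : f =ᶠ[atTop] x₂ := by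
    filter_upwards [eventually_ge_atTop t₀] with t ht
    simp [hf, max_eq_left ht]
  have hx2lim : Tendsto x₂ atTop (𝓝 xbar) := hlim.congr' hfeq
  have hxbar_nonneg : 0 ≤ xbar := le_ciInf fun t => hx2nonneg _ (le_max_right t t₀)
  have hxbar_le : xbar ≤ x₂ t₀ := by
    have h1 : xbar ≤ f t₀ := ciInf_le hfbdd t₀
    simpa [hf] using h1
  have hge : ∀ t, t₀ ≤ t → xbar ≤ x₂ t := by
    intro t ht
    apply le_of_tendsto hx2lim
    filter_upwards [eventually_ge_atTop t] with u hu
    exact hanti ht (le_trans ht hu) hu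
  have hxbar0 : xbar = 0 := by
    by_contra h
    have hxb : 0 < xbar := lt_of_le_of_ne hxbar_nonneg (Ne.symm h)
    set B : ℝ := K * x₂ t₀ + (lam₁ / c₂) * x₂ t₀ + |x₁ t₀| + 1 with hB
    have hBpos : 0 < B := by
      have := abs_nonneg (x₁ t₀); positivity
    set T : ℝ := t₀ + B / (c₁ * xbar) with hT
    have hTge : t₀ ≤ T := by
      have h0 : 0 < B / (c₁ * xbar) := by positivity
      rw [hT]; linarith
    have hcont1 : ContinuousOn x₁ (uIcc t₀ T) := by
      rw [uIcc_of_le hTge]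
      exact fun t ht => ((hd1 t ht.1).continuousAt).continuousWithinAt
    have hcont2 : ContinuousOn x₂ (uIcc t₀ T) := by
      rw [uIcc_of_le hTge]
      exact fun t ht => ((hd2 t ht.1).continuousAt).continuousWithinAt
    have hint1 : IntervalIntegrable (fun t => -lam₁ * x₁ t + c₁ * x₂ t) MeasureTheory.volume t₀ T :=
      ((continuousOn_const.mul hcont1).add (continuousOn_const.mul hcont2)).intervalIntegrable
    have hint2 : IntervalIntegrable (fun t => -c₂ * |x₁ t|) MeasureTheory.volume t₀ T :=
      (continuousOn_const.mul hcont1.abs).intervalIntegrable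
    have hintg : IntervalIntegrable (fun t => (lam₁ / c₂) * (-c₂ * |x₁ t|) + c₁ * xbar)
        MeasureTheory.volume t₀ T :=
      ((continuousOn_const.mul (continuousOn_const.mul hcont1.abs)).add
        continuousOn_const).intervalIntegrable
    have hI1 : ∫ t in t₀..T, (-lam₁ * x₁ t + c₁ * x₂ t) = x₁ T - x₁ t₀ :=
      intervalIntegral.integral_eq_sub_of_hasDerivAt
        (fun t ht => hd1 t (by rw [uIcc_of_le hTge] at ht; exact ht.1)) hint1
    have hI2 : ∫ t in t₀..T, (-c₂ * |x₁ t|) = x₂ T - x₂ t₀ :=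
      intervalIntegral.integral_eq_sub_of_hasDerivAt
        (fun t ht => hd2 t (by rw [uIcc_of_le hTge] at ht; exact ht.1)) hint2
    have hmono : ∫ t in t₀..T, ((lam₁ / c₂) * (-c₂ * |x₁ t|) + c₁ * xbar)
        ≤ ∫ t in t₀..T, (-lam₁ * x₁ t + c₁ * x₂ t) := by
      apply intervalIntegral.integral_mono_on hTge hintg hint1
      intro t ht
      have h1 : xbar ≤ x₂ t := hge t ht.1
      have h2 : x₁ t ≤ |x₁ t| := le_abs_self _
      have h3 : (lam₁ / c₂) * (-c₂ * |x₁ t|) = -lam₁ * |x₁ t| := by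
        field_simp
      rw [h3]
      nlinarith [mul_le_mul_of_nonneg_left h2 hlam₁.le, mul_le_mul_of_nonneg_left h1 hc₁.le]
    have hsplit : ∫ t in t₀..T, ((lam₁ / c₂) * (-c₂ * |x₁ t|) + c₁ * xbar)
        = (lam₁ / c₂) * (x₂ T - x₂ t₀) + (T - t₀) * (c₁ * xbar) := by
      rw [intervalIntegral.integral_add (f := fun t => (lam₁ / c₂) * (-c₂ * |x₁ t|)) ((continuousOn_const.mul
          (continuousOn_const.mul hcont1.abs)).intervalIntegrable)
          intervalIntegrable_const,
        intervalIntegral.integral_const_mul, hI2, intervalIntegral.integral_const]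
      simp [smul_eq_mul]
    have hTt : (T - t₀) * (c₁ * xbar) = B := by
      rw [hT]
      field_simp
      ring
    have hfin : x₁ T - x₁ t₀ ≥ (lam₁ / c₂) * (x₂ T - x₂ t₀) + B := by
      rw [← hTt, ← hsplit, ← hI1]
      exact hmono
    have hb1 : x₁ T ≤ K * x₂ t₀ := by
      have h1 := cone T hTge
      have h2 := le_abs_self (x₁ T)
      have h3 := hanti self_mem_Ici hTge hTge
      nlinarith [mul_le_mul_of_nonneg_left h3 hK.le]
    have hb2 : 0 ≤ x₂ T := hx2nonneg T hTge
    have hb3 : 0 ≤ (lam₁ / c₂) := by positivity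
    have hb4 := abs_nonneg (x₁ t₀)
    have hb5 := neg_abs_le (x₁ t₀)
    have hb6 : 0 ≤ (lam₁ / c₂) * x₂ T := mul_nonneg hb3 hb2
    rw [hB] at hfin
    linarith
  refine ⟨hIcc, ?_, xbar, ⟨hxbar_nonneg, hxbar_le⟩, hx2lim⟩
  have hupper : Tendsto (fun t => K * x₂ t) atTop (𝓝 0) := by
    have := hx2lim.const_mul K
    rw [hxbar0] at this
    simpa using this
  have hlower : Tendsto (fun t => -(K * x₂ t)) atTop (𝓝 0) := by
    simpa using hupper.neg
  apply tendsto_of_tendsto_of_tendsto_of_le_of_le' hlower hupper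
  · filter_upwards [eventually_ge_atTop t₀] with t ht
    exact neg_le_of_abs_le (cone t ht)
  · filter_upwards [eventually_ge_atTop t₀] with t ht
    exact le_of_abs_le (cone t ht)
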